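/- For all g ∈ G and l, m ∈ ℕ, if h_1, …, h_k ∈ G form a complete set of representatives of the left cosets of φ^l(G) in G, then in B(ℓ²(G)) one has the refinement identity U_g S^m (S^m)* (U_g)* = ∑_{j=1}^k U_{g·φ^m(h_j)} S^{l+m} (S^{l+m})* (U_{g·φ^m(h_j)})*. -/

import Mathlib

/-- `ℓ²(G)`. -/
noncomputable abbrev l2 (G : Type*) := lp (fun _ : G => ℂ) 2

/-- The orthonormal basis vector `ξ_h ∈ ℓ²(G)`. -/
noncomputable def xi (G : Type*) [DecidableEq G] (h : G) : l2 G := lp.single 2 h (1 : ℂ)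

/-- `φ^n(G)` as a subgroup of `G`. -/
def rng {G : Type*} [Group G] (φ : Monoid.End G) (n : ℕ) : Subgroup G :=
  MonoidHom.range ((φ ^ n : Monoid.End G) : G →* G)

/-- The operator `P g n = U_g S^n (S^n)* (U_g)*`. -/
noncomputable def P {G : Type*} (U : G → (l2 G →L[ℂ] l2 G)) (S : l2 G →L[ℂ] l2 G)
    (g : G) (n : ℕ) : l2 G →L[ℂ] l2 G :=
  U g * S ^ n * star (S ^ n) * star (U g)

section lemmas
variable {G : Type*} [DecidableEq G]

lemma l2_apply_eq_inner (v : l2 G) (i : G) : v i = inner ℂ (xi G i) v := by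
  rw [xi, lp.inner_single_left]; simp

lemma xi_apply (h i : G) : (xi G h) i = if i = h then 1 else 0 := by
  rw [xi, lp.single_apply]
  split
  · next heq => subst heq; simp
  · simp_all

lemma xi_single_smul (i : G) (c : ℂ) : lp.single (E := fun _ : G => ℂ) 2 i c = c • xi G i := by
  rw [xi, ← lp.single_smul]; norm_num

lemma clm_ext {A B : l2 G →L[ℂ] l2 G} (h : ∀ g, A (xi G g) = B (xi G g)) : A = B := by
  refine ContinuousLinearMap.ext fun f => ?_
  have hf := lp.hasSum_single (E := fun _ : G => ℂ) ENNReal.ofNat_ne_top f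
  have hA : HasSum (fun i => A (lp.single 2 i (f i))) (A f) := A.hasSum hf
  have hB : HasSum (fun i => B (lp.single 2 i (f i))) (B f) := B.hasSum hf
  refine hA.unique ?_
  convert hB using 2 with i
  rw [xi_single_smul, map_smul, map_smul, h]

lemma vec_ext {v w : l2 G} (h : ∀ i : G, (inner ℂ (xi G i) v : ℂ) = inner ℂ (xi G i) w) : v = w := by
  ext i
  rw [l2_apply_eq_inner, l2_apply_eq_inner, h]

lemma inner_xi_xi (a b : G) : (inner ℂ (xi G a) (xi G b) : ℂ) = if a = b then 1 else 0 := by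
  rw [← l2_apply_eq_inner, xi_apply]

end lemmas

section group
variable {G : Type*} [Group G] (φ : Monoid.End G)

lemma end_mul_apply (ψ χ : Monoid.End G) (x : G) : (ψ * χ) x = ψ (χ x) := rfl

lemma pow_inj (hinj : Function.Injective φ) (n : ℕ) :
    Function.Injective (φ ^ n : Monoid.End G) := by
  induction n with
  | zero => simpa using Function.injective_id
  | succ n ih =>
    intro a b h
    rw [pow_succ, end_mul_apply, end_mul_apply] at h
    exact hinj (ih h)

lemma pow_add_apply' (l m : ℕ) (x : G) :
    (φ ^ (l + m)) x = (φ ^ m) ((φ ^ l) x) := by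
  rw [add_comm, pow_add, end_mul_apply]

end group

section ops
variable {G : Type*} [Group G] [DecidableEq G]
  {U : G → (l2 G →L[ℂ] l2 G)} {S : l2 G →L[ℂ] l2 G} {φ : Monoid.End G}

lemma Spow_apply (hS : ∀ h : G, S (xi G h) = xi G (φ h)) (n : ℕ) (h : G) :
    (S ^ n) (xi G h) = xi G ((φ ^ n) h) := by
  induction n generalizing h with
  | zero => simp [pow_zero]
  | succ n ih =>
    rw [pow_succ, ContinuousLinearMap.mul_apply, hS, ih, pow_succ, end_mul_apply]

lemma starU_apply (hU : ∀ g h : G, U g (xi G h) = xi G (g * h)) (g h : G) :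
    star (U g) (xi G h) = xi G (g⁻¹ * h) := by
  refine vec_ext fun i => ?_
  rw [ContinuousLinearMap.star_eq_adjoint, ContinuousLinearMap.adjoint_inner_right,
    hU, inner_xi_xi, inner_xi_xi]
  congr 1
  simp [eq_iff_iff, eq_inv_mul_iff_mul_eq]

lemma starS_apply_mem (hinj : Function.Injective φ)
    (hS : ∀ h : G, S (xi G h) = xi G (φ h)) (n : ℕ) (a : G) :
    star (S ^ n) (xi G ((φ ^ n) a)) = xi G a := by
  refine vec_ext fun i => ?_
  rw [ContinuousLinearMap.star_eq_adjoint, ContinuousLinearMap.adjoint_inner_right,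
    Spow_apply hS, inner_xi_xi, inner_xi_xi]
  congr 1
  simp only [eq_iff_iff]
  exact ⟨fun hh => pow_inj φ hinj n hh, fun hh => by rw [hh]⟩

lemma starS_apply_not (hS : ∀ h : G, S (xi G h) = xi G (φ h)) (n : ℕ) (h : G)
    (hh : ∀ a, (φ ^ n) a ≠ h) :
    star (S ^ n) (xi G h) = 0 := by
  refine vec_ext fun i => ?_
  rw [ContinuousLinearMap.star_eq_adjoint, ContinuousLinearMap.adjoint_inner_right,
    Spow_apply hS, inner_xi_xi, inner_zero_right, if_neg (hh i)]

lemma P_apply_mem (hinj : Function.Injective φ)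
    (hU : ∀ g h : G, U g (xi G h) = xi G (g * h))
    (hS : ∀ h : G, S (xi G h) = xi G (φ h)) (g : G) (n : ℕ) (h a : G)
    (ha : (φ ^ n) a = g⁻¹ * h) :
    P U S g n (xi G h) = xi G h := by
  simp only [P, ContinuousLinearMap.mul_apply]
  rw [starU_apply hU, ← ha, starS_apply_mem hinj hS, Spow_apply hS, ha, hU]
  congr 1
  group

lemma P_apply_not (hU : ∀ g h : G, U g (xi G h) = xi G (g * h))
    (hS : ∀ h : G, S (xi G h) = xi G (φ h)) (g : G) (n : ℕ) (h : G)
    (hh : ∀ a, (φ ^ n) a ≠ g⁻¹ * h) :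
    P U S g n (xi G h) = 0 := by
  simp only [P, ContinuousLinearMap.mul_apply]
  rw [starU_apply hU, starS_apply_not hS n _ hh, map_zero, map_zero]

end ops

/-- **Statement 8.** For all `g ∈ G` and `l, m ∈ ℕ`, if `h_1, …, h_k` is a complete set
of representatives of the left cosets of `φ^l(G)` in `G`, then
`U_g S^m (S^m)* (U_g)* = ∑ⱼ U_{g·φ^m(hⱼ)} S^{l+m} (S^{l+m})* (U_{g·φ^m(hⱼ)})*`. -/
theorem P_refinement (G : Type*) [Group G] [DecidableEq G]
    (φ : Monoid.End G) (hinj : Function.Injective φ) (hfin : Finite (G ⧸ rng φ 1))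
    (U : G → (l2 G →L[ℂ] l2 G)) (S : l2 G →L[ℂ] l2 G)
    (hU : ∀ g h : G, U g (xi G h) = xi G (g * h))
    (hS : ∀ h : G, S (xi G h) = xi G (φ h)) :
    ∀ (g : G) (l m k : ℕ) (r : Fin k → G),
      Function.Bijective (fun j => (QuotientGroup.mk (r j) : G ⧸ rng φ l)) →
      P U S g m = ∑ j : Fin k, P U S (g * (φ ^ m) (r j)) (l + m) := by
  intro g l m k r hr
  refine clm_ext fun h => ?_
  rw [ContinuousLinearMap.sum_apply]
  by_cases hmem : ∃ y, (φ ^ m) y = g⁻¹ * h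
  · obtain ⟨y, hy⟩ := hmem
    obtain ⟨j0, hj0⟩ := hr.2 (QuotientGroup.mk y)
    rw [P_apply_mem hinj hU hS g m h y hy]
    -- the j0-term equals xi h, all other terms vanish
    rw [Finset.sum_eq_single_of_mem j0 (Finset.mem_univ j0)]
    · -- value at j0
      have : ((r j0)⁻¹ * y) ∈ rng φ l := (QuotientGroup.eq (s := rng φ l)).mp hj0
      obtain ⟨b, hb⟩ := this
      refine (P_apply_mem hinj hU hS _ _ _ b ?_).symm
      have hb' : (φ ^ l) b = (r j0)⁻¹ * y := hb
      rw [pow_add_apply', hb', map_mul, map_inv, mul_inv_rev, mul_assoc, hy]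
    · intro j _ hj
      refine P_apply_not hU hS _ _ _ fun a haeq => ?_
      apply hj
      have h1 : (φ ^ m) ((φ ^ l) a) = (g * (φ ^ m) (r j))⁻¹ * h := by
        rw [← pow_add_apply']; exact haeq
      have h2 : (φ ^ m) ((r j) * (φ ^ l) a) = (φ ^ m) y := by
        rw [map_mul, h1, mul_inv_rev, hy]
        group
      have h3 : (r j) * (φ ^ l) a = y := pow_inj φ hinj m h2
      have h4 : (QuotientGroup.mk (r j) : G ⧸ rng φ l) = QuotientGroup.mk y := by
        rw [QuotientGroup.eq]
        exact ⟨a, by rw [← h3]; group; rfl⟩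
      exact hr.1 (h4.trans hj0.symm)
  · rw [P_apply_not hU hS g m h (fun a ha => hmem ⟨a, ha⟩)]
    refine (Finset.sum_eq_zero fun j _ => ?_).symm
    refine P_apply_not hU hS _ _ _ fun a haeq => ?_
    refine hmem ⟨(r j) * (φ ^ l) a, ?_⟩
    have h1 : (φ ^ m) ((φ ^ l) a) = (g * (φ ^ m) (r j))⁻¹ * h := by
      rw [← pow_add_apply']; exact haeq
    rw [map_mul, h1, mul_inv_rev]
    group
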